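/- arXiv:1306.2405 — 2 statements merged into one kernel-verified Lean document; each statement's English description precedes it below -/
import Mathlib

section
/- Let G be a connected edge-coloured graph in which every vertex has at most one outgoing edge and at most one incoming edge. Then for all vertices v, v' ∈ V_G, if v ~_G v' then (G,v) ≅ (G,v'); i.e., on such graphs vertex bisimilarity coincides with the automorphism-orbit relation. -/
/-- An edge-coloured (multi)graph on vertex set `Fin n`: `col v w` is the set of
colours of directed edges from `v` to `w`. -/
structure ColGraph (C : Type) where
  n : ℕ
  col : Fin n → Fin n → Set C

namespace ColGraph

variable {C : Type}

/-- The rigidity condition: for each vertex, distinct outgoing edges have distinct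
colours and distinct incoming edges have distinct colours. -/
def Rigid (G : ColGraph C) : Prop :=
  (∀ (v w w' : Fin G.n) (c : C), c ∈ G.col v w → c ∈ G.col v w' → w = w') ∧
  (∀ (v w w' : Fin G.n) (c : C), c ∈ G.col w v → c ∈ G.col w' v → w = w')

/-- `φ` is an isomorphism of edge-coloured graphs from `G` to `G'`. -/
def IsIso (G G' : ColGraph C) (φ : Fin G.n ≃ Fin G'.n) : Prop :=
  ∀ v w : Fin G.n, G'.col (φ v) (φ w) = G.col v w

/-- `G ≅ G'`. -/
def Iso (G G' : ColGraph C) : Prop := ∃ φ : Fin G.n ≃ Fin G'.n, IsIso G G' φ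

/-- `(G,v) ≅ (G',v')`. -/
def IsoPt (G : ColGraph C) (v : Fin G.n) (G' : ColGraph C) (v' : Fin G'.n) : Prop :=
  ∃ φ : Fin G.n ≃ Fin G'.n, IsIso G G' φ ∧ φ v = v'

/-- The relabelled graph `α(G)`. -/
def relabel (G : ColGraph C) (α : Fin G.n ≃ Fin G.n) : ColGraph C where
  n := G.n
  col v w := G.col (α.symm v) (α.symm w)

/-- The DFA state set `S_G = V_G ∪ {⊥_v | v ∈ V_G}`: `Sum.inl v` is the vertex `v`,
`Sum.inr v` is the sink state `⊥_v`. -/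
abbrev State (G : ColGraph C) : Type := Fin G.n ⊕ Fin G.n

/-- Symbols: `Sum.inl c` is the colour `c`, `Sum.inr c` is the reverse colour `c⁻`. -/
abbrev Sym (C : Type) : Type := C ⊕ C

/-- Membership in the alphabet `Σ_G = C_G ∪ {c⁻ | c ∈ C_G}`, where `C_G` is the set of
colours of edges of `G`. -/
def InAlphabet (G : ColGraph C) : Sym C → Prop
  | Sum.inl c => ∃ v w, c ∈ G.col v w
  | Sum.inr c => ∃ v w, c ∈ G.col v w

open scoped Classical in
/-- The transition function `δ_G : S_G × Σ_G → S_G`. -/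
noncomputable def delta (G : ColGraph C) : State G → Sym C → State G
  | Sum.inl v, Sum.inl c =>
      if h : ∃ w, c ∈ G.col v w then Sum.inl h.choose else Sum.inr v
  | Sum.inl v, Sum.inr c =>
      if h : ∃ w, c ∈ G.col w v then Sum.inl h.choose else Sum.inr v
  | Sum.inr v, _ => Sum.inr v

/-- The extension `δ̂_G` of `δ_G` to words. -/
noncomputable def deltaHat (G : ColGraph C) (s : State G) (w : List (Sym C)) : State G :=
  w.foldl G.delta s

/-- Vertex bisimilarity `s ~_G s'`: for every word `w` over the alphabet `Σ_G`,
`δ̂_G(s,w) ∈ V_G ↔ δ̂_G(s',w) ∈ V_G`. -/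
def Bisim (G : ColGraph C) (s s' : State G) : Prop :=
  ∀ w : List (Sym C), (∀ x ∈ w, G.InAlphabet x) →
    ((G.deltaHat s w).isLeft = true ↔ (G.deltaHat s' w).isLeft = true)

/-- The underlying undirected (simple) graph of `G`. -/
def toSimple (G : ColGraph C) : SimpleGraph (Fin G.n) :=
  SimpleGraph.fromRel fun v w => (G.col v w).Nonempty

end ColGraph
namespace ColGraph

variable {C : Type}

open scoped Classical in
/-- Partial successor map: the unique out-neighbour, if any. -/
noncomputable def nxt (G : ColGraph C) (u : Fin G.n) : Option (Fin G.n) :=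
  if h : ∃ w c, c ∈ G.col u w then some h.choose else none

section Aux

variable {G : ColGraph C}

lemma nxt_eq_some_of_mem
    (hout : ∀ (v w w' : Fin G.n) (c c' : C), c ∈ G.col v w → c' ∈ G.col v w' → w = w')
    {u w : Fin G.n} {c : C} (hc : c ∈ G.col u w) : G.nxt u = some w := by
  have h : ∃ w c, c ∈ G.col u w := ⟨w, c, hc⟩
  obtain ⟨c', hc'⟩ := h.choose_spec
  simp only [nxt, dif_pos h]
  exact congrArg some (hout u _ w c' c hc' hc)

lemma exists_col_of_nxt_eq_some {u w : Fin G.n} (h : G.nxt u = some w) :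
    ∃ c, c ∈ G.col u w := by
  by_cases h' : ∃ w c, c ∈ G.col u w
  · obtain ⟨c', hc'⟩ := h'.choose_spec
    simp only [nxt, dif_pos h'] at h
    exact ⟨c', (Option.some_injective _ h) ▸ hc'⟩
  · simp only [nxt, dif_neg h'] at h
    exact absurd h (by simp)

lemma not_mem_of_nxt_eq_none {u : Fin G.n} (h : G.nxt u = none) (w : Fin G.n) (c : C) :
    c ∉ G.col u w := by
  intro hc
  have h' : ∃ w c, c ∈ G.col u w := ⟨w, c, hc⟩
  simp [nxt, dif_pos h'] at h

lemma delta_inl_inl_of_mem (hG : G.Rigid) {u w : Fin G.n} {c : C} (hc : c ∈ G.col u w) :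
    G.delta (Sum.inl u) (Sum.inl c) = Sum.inl w := by
  have h : ∃ w, c ∈ G.col u w := ⟨w, hc⟩
  simp only [delta, dif_pos h]
  exact congrArg Sum.inl (hG.1 u _ w c h.choose_spec hc)

lemma delta_inl_inl_of_not {u : Fin G.n} {c : C} (h : ¬ ∃ w, c ∈ G.col u w) :
    G.delta (Sum.inl u) (Sum.inl c) = Sum.inr u := by
  simp only [delta, dif_neg h]

lemma deltaHat_cons (s : State G) (x : Sym C) (w : List (Sym C)) :
    G.deltaHat s (x :: w) = G.deltaHat (G.delta s x) w := rfl

lemma deltaHat_inr {u : Fin G.n} (w : List (Sym C)) :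
    G.deltaHat (Sum.inr u) w = Sum.inr u := by
  induction w with
  | nil => rfl
  | cons x xs ih =>
    rw [deltaHat_cons]
    have hx : G.delta (Sum.inr u) x = Sum.inr u := by cases x <;> rfl
    rw [hx]; exact ih

lemma bisim_symm {s s' : State G} (h : G.Bisim s s') : G.Bisim s' s :=
  fun w hw => (h w hw).symm

lemma bisim_nxt_none (hG : G.Rigid) {a b : Fin G.n}
    (hab : G.Bisim (Sum.inl a) (Sum.inl b)) (ha : G.nxt a = none) : G.nxt b = none := by
  cases hb : G.nxt b with
  | none => rfl
  | some w =>
    obtain ⟨c, hc⟩ := exists_col_of_nxt_eq_some hb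
    have halpha : ∀ x ∈ [Sum.inl c], G.InAlphabet x := by
      intro x hx
      simp only [List.mem_singleton] at hx
      subst hx; exact ⟨b, w, hc⟩
    have hbis := hab [Sum.inl c] halpha
    have h1 : G.deltaHat (Sum.inl b) [Sum.inl c] = Sum.inl w := delta_inl_inl_of_mem hG hc
    have h2 : G.deltaHat (Sum.inl a) [Sum.inl c] = Sum.inr a :=
      delta_inl_inl_of_not (fun ⟨w', hw'⟩ => not_mem_of_nxt_eq_none ha w' c hw')
    rw [h1, h2] at hbis
    simp at hbis

lemma mem_col_of_bisim (hG : G.Rigid)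
    (hout : ∀ (v w w' : Fin G.n) (c c' : C), c ∈ G.col v w → c' ∈ G.col v w' → w = w')
    {a b a' b' : Fin G.n} (hab : G.Bisim (Sum.inl a) (Sum.inl b))
    (hb : G.nxt b = some b') {c : C} (hc : c ∈ G.col a a') : c ∈ G.col b b' := by
  have halpha : ∀ x ∈ [Sum.inl c], G.InAlphabet x := by
    intro x hx
    simp only [List.mem_singleton] at hx
    subst hx; exact ⟨a, a', hc⟩
  have hbis := hab [Sum.inl c] halpha
  have h1 : G.deltaHat (Sum.inl a) [Sum.inl c] = Sum.inl a' := delta_inl_inl_of_mem hG hc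
  rw [h1] at hbis
  by_cases hex : ∃ w, c ∈ G.col b w
  · obtain ⟨w, hw⟩ := hex
    have : G.nxt b = some w := nxt_eq_some_of_mem hout hw
    rw [hb] at this
    exact (Option.some_injective _ this) ▸ hw
  · have h2 : G.deltaHat (Sum.inl b) [Sum.inl c] = Sum.inr b := delta_inl_inl_of_not hex
    rw [h2] at hbis
    simp at hbis

lemma col_eq_of_bisim (hG : G.Rigid)
    (hout : ∀ (v w w' : Fin G.n) (c c' : C), c ∈ G.col v w → c' ∈ G.col v w' → w = w')
    {a b a' b' : Fin G.n} (hab : G.Bisim (Sum.inl a) (Sum.inl b))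
    (ha : G.nxt a = some a') (hb : G.nxt b = some b') : G.col a a' = G.col b b' := by
  ext c
  exact ⟨fun hc => mem_col_of_bisim hG hout hab hb hc,
    fun hc => mem_col_of_bisim hG hout (bisim_symm hab) ha hc⟩

lemma bisim_step (hG : G.Rigid)
    (hout : ∀ (v w w' : Fin G.n) (c c' : C), c ∈ G.col v w → c' ∈ G.col v w' → w = w')
    {a b a' b' : Fin G.n} (hab : G.Bisim (Sum.inl a) (Sum.inl b))
    (ha : G.nxt a = some a') (hb : G.nxt b = some b') :
    G.Bisim (Sum.inl a') (Sum.inl b') := by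
  obtain ⟨c, hc⟩ := exists_col_of_nxt_eq_some ha
  have hc' : c ∈ G.col b b' := mem_col_of_bisim hG hout hab hb hc
  intro w hw
  have halpha : ∀ x ∈ Sum.inl c :: w, G.InAlphabet x := by
    intro x hx
    rcases List.mem_cons.mp hx with hx | hx
    · subst hx; exact ⟨a, a', hc⟩
    · exact hw x hx
  have := hab (Sum.inl c :: w) halpha
  rwa [deltaHat_cons, deltaHat_cons, delta_inl_inl_of_mem hG hc,
    delta_inl_inl_of_mem hG hc'] at this

lemma closure (hconn : (ColGraph.toSimple G).Connected) (S : Set (Fin G.n))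
    (hS : ∀ a b, a ∈ S → ((G.col a b).Nonempty ∨ (G.col b a).Nonempty) → b ∈ S) :
    ∀ {a b : Fin G.n}, a ∈ S → b ∈ S := by
  have walkcl : ∀ {a b : Fin G.n}, (G.toSimple).Walk a b → a ∈ S → b ∈ S := by
    intro a b w
    induction w with
    | nil => exact id
    | cons h p ih =>
      intro ha
      apply ih
      have h' := (SimpleGraph.fromRel_adj _ _ _).mp h
      exact hS _ _ ha h'.2
  intro a b ha
  obtain ⟨w⟩ := hconn a b
  exact walkcl w ha

end Aux

end ColGraph

theorem stmt_8 {C : Type} (G : ColGraph C) (hG : G.Rigid)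
    (hconn : (ColGraph.toSimple G).Connected)
    (hout : ∀ (v w w' : Fin G.n) (c c' : C), c ∈ G.col v w → c' ∈ G.col v w' → w = w')
    (hin : ∀ (v w w' : Fin G.n) (c c' : C), c ∈ G.col w v → c' ∈ G.col w' v → w = w')
    (v v' : Fin G.n) (h : G.Bisim (Sum.inl v) (Sum.inl v')) :
    ColGraph.IsoPt G v G v' := by
  classical
  open ColGraph in
  by_cases hdead : ∃ u0, G.nxt u0 = none
  · -- "path" case: there is a vertex with no outgoing edge; we show v = v'.
    obtain ⟨u0, hu0⟩ := hdead
    set F : Option (Fin G.n) → Option (Fin G.n) := fun o => o.bind G.nxt with hF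
    have hFnone : ∀ k, F^[k] none = none := by
      intro k
      induction k with
      | zero => rfl
      | succ m ih => rw [Function.iterate_succ_apply, show F none = none from rfl, ih]
    have hFsome : ∀ a : Fin G.n, F (some a) = G.nxt a := fun a => rfl
    have hall : ∀ a : Fin G.n, ∃ k, F^[k] (some a) = some u0 := by
      intro a
      refine ColGraph.closure hconn {x | ∃ k, F^[k] (some x) = some u0} ?_ ⟨0, rfl⟩
      rintro x y ⟨k, hk⟩ hadj
      rcases hadj with ⟨c, hc⟩ | ⟨c, hc⟩
      · have hx : G.nxt x = some y := ColGraph.nxt_eq_some_of_mem hout hc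
        cases k with
        | zero =>
          simp only [Function.iterate_zero, id_eq, Option.some_injective] at hk
          have : x = u0 := by exact_mod_cast Option.some_injective _ hk
          rw [this, hu0] at hx
          exact absurd hx (by simp)
        | succ m =>
          rw [Function.iterate_succ_apply, hFsome, hx] at hk
          exact ⟨m, hk⟩
      · have hy : G.nxt y = some x := ColGraph.nxt_eq_some_of_mem hout hc
        exact ⟨k + 1, by rw [Function.iterate_succ_apply, hFsome, hy]; exact hk⟩
    have key : ∀ (j : ℕ) (a b : Fin G.n), G.Bisim (Sum.inl a) (Sum.inl b) →
        F^[j] (some a) = some u0 → a = b := by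
      intro j
      induction j with
      | zero =>
        intro a b hab hja
        simp only [Function.iterate_zero, id_eq] at hja
        have ha : a = u0 := Option.some_injective _ hja
        subst ha
        have hbn : G.nxt b = none := ColGraph.bisim_nxt_none hG hab hu0
        obtain ⟨k, hk⟩ := hall b
        cases k with
        | zero =>
          simp only [Function.iterate_zero, id_eq] at hk
          exact (Option.some_injective _ hk).symm
        | succ m =>
          rw [Function.iterate_succ_apply, hFsome, hbn, hFnone] at hk
          exact absurd hk (by simp)
      | succ m ih =>
        intro a b hab hja
        rw [Function.iterate_succ_apply, hFsome] at hja
        cases hna : G.nxt a with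
        | none =>
          rw [hna, hFnone] at hja
          exact absurd hja (by simp)
        | some a' =>
          rw [hna] at hja
          cases hnb : G.nxt b with
          | none =>
            have hcontra := ColGraph.bisim_nxt_none hG (ColGraph.bisim_symm hab) hnb
            rw [hcontra] at hna
            exact absurd hna (by simp)
          | some b' =>
            have hab' := ColGraph.bisim_step hG hout hab hna hnb
            have heq := ih a' b' hab' hja
            subst heq
            obtain ⟨c, hc⟩ := ColGraph.exists_col_of_nxt_eq_some hna
            obtain ⟨c', hc'⟩ := ColGraph.exists_col_of_nxt_eq_some hnb
            exact hin a' a b c c' hc hc'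
    obtain ⟨j, hj⟩ := hall v
    have hv : v = v' := key j v v' h hj
    exact ⟨Equiv.refl _, fun a b => rfl, hv ▸ rfl⟩
  · -- "cycle" case: every vertex has an outgoing edge.
    push_neg at hdead
    have hs : ∀ u, ∃ w, G.nxt u = some w := by
      intro u
      cases hu : G.nxt u with
      | none => exact absurd hu (hdead u)
      | some w => exact ⟨w, rfl⟩
    set f' : Fin G.n → Fin G.n := fun u => (hs u).choose with hf'def
    have hf' : ∀ u, G.nxt u = some (f' u) := fun u => (hs u).choose_spec
    have hinj : Function.Injective f' := by
      intro a b hab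
      obtain ⟨c, hc⟩ := ColGraph.exists_col_of_nxt_eq_some (hf' a)
      obtain ⟨c', hc'⟩ := ColGraph.exists_col_of_nxt_eq_some (hf' b)
      rw [hab] at hc
      exact hin (f' b) a b c c' hc hc'
    set α : Equiv.Perm (Fin G.n) := Equiv.ofBijective f'
      (Finite.injective_iff_bijective.mp hinj) with hαdef
    have hαcoe : ⇑α = f' := rfl
    have hpow : ∀ (k : ℕ) (a : Fin G.n), (α ^ k) a = f'^[k] a := by
      intro k a
      rw [Equiv.Perm.coe_pow, hαcoe]
    have hclosed : ∀ x y : Fin G.n, x ∈ {x | ∃ k : ℤ, (α ^ k) v = x} →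
        ((G.col x y).Nonempty ∨ (G.col y x).Nonempty) →
        y ∈ {x | ∃ k : ℤ, (α ^ k) v = x} := by
      rintro x y ⟨k, hk⟩ hadj
      show ∃ k : ℤ, (α ^ k) v = y
      rcases hadj with ⟨c, hc⟩ | ⟨c, hc⟩
      · have hx : f' x = y := Option.some_injective _
          ((hf' x).symm.trans (ColGraph.nxt_eq_some_of_mem hout hc))
        refine ⟨1 + k, ?_⟩
        rw [zpow_add, zpow_one, Equiv.Perm.mul_apply, hk]
        rw [show α x = f' x from rfl, hx]
      · have hy : f' y = x := Option.some_injective _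
          ((hf' y).symm.trans (ColGraph.nxt_eq_some_of_mem hout hc))
        refine ⟨-1 + k, ?_⟩
        rw [zpow_add, zpow_neg_one, Equiv.Perm.mul_apply, hk]
        apply α.injective
        rw [Equiv.Perm.inv_def, Equiv.apply_symm_apply]
        rw [show α y = f' y from rfl, hy]
    have horb : ∀ a : Fin G.n, ∃ k : ℕ, f'^[k] v = a := by
      intro a
      obtain ⟨k, hk⟩ := ColGraph.closure hconn _ hclosed (a := v) (b := a) ⟨0, by simp⟩
      refine ⟨(k % (orderOf α : ℤ)).toNat, ?_⟩
      rw [← hpow]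
      have hord : (0 : ℤ) < (orderOf α : ℤ) := by exact_mod_cast orderOf_pos α
      have h1 : α ^ ((k % (orderOf α : ℤ)).toNat) = α ^ (k % (orderOf α : ℤ)) := by
        rw [← zpow_natCast, Int.toNat_of_nonneg (Int.emod_nonneg k hord.ne')]
      rw [h1, zpow_mod_orderOf]
      exact hk
    obtain ⟨d, hd⟩ := horb v'
    have hbisk : ∀ k : ℕ, G.Bisim (Sum.inl (f'^[k] v)) (Sum.inl (f'^[k] v')) := by
      intro k
      induction k with
      | zero => exact h
      | succ m ih =>
        rw [Function.iterate_succ_apply', Function.iterate_succ_apply']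
        exact ColGraph.bisim_step hG hout ih (hf' _) (hf' _)
    have hbisall : ∀ a : Fin G.n, G.Bisim (Sum.inl a) (Sum.inl (f'^[d] a)) := by
      intro a
      obtain ⟨k, hk⟩ := horb a
      have h1 : f'^[k] v' = f'^[d] a := by
        rw [← hd, ← Function.iterate_add_apply, ← hk, ← Function.iterate_add_apply,
          Nat.add_comm]
      have := hbisk k
      rwa [hk, h1] at this
    have e1 : ∀ a : Fin G.n, f'^[d] (f' a) = f' (f'^[d] a) := by
      intro a
      rw [← Function.iterate_succ_apply, Function.iterate_succ_apply']
    refine ⟨α ^ d, ?_, ?_⟩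
    · intro a b
      simp only [hpow]
      by_cases hb : b = f' a
      · subst hb
        rw [e1]
        exact (ColGraph.col_eq_of_bisim hG hout (hbisall a) (hf' a) (hf' _)).symm
      · have hempty1 : G.col a b = ∅ := by
          ext c
          simp only [Set.mem_empty_iff_false, iff_false]
          intro hc
          exact hb (Option.some_injective _
            ((ColGraph.nxt_eq_some_of_mem hout hc).symm.trans (hf' a)))
        have hempty2 : G.col (f'^[d] a) (f'^[d] b) = ∅ := by
          ext c
          simp only [Set.mem_empty_iff_false, iff_false]
          intro hc
          have h2 : f'^[d] b = f' (f'^[d] a) := Option.some_injective _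
            ((ColGraph.nxt_eq_some_of_mem hout hc).symm.trans (hf' _))
          rw [← e1] at h2
          exact hb (Function.Injective.iterate hinj d h2)
        rw [hempty1, hempty2]
    · rw [hpow]
      exact hd
end

section
/- The encoding ρ respects isomorphism: for all site graphs S₀ and S₁, S₀ ≅ S₁ as site graphs if and only if ρ(S₀) ≅ ρ(S₁) as edge-coloured graphs. -/
/-- A site graph: vertices `Fin n`, undirected edges given as two-element sets of
(vertex, site) pairs, and a protein naming. -/
structure SiteGraph (N S : Type) where
  n : ℕ
  edges : Set (Set (Fin n × S))
  names : Fin n → N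

namespace SiteGraph

variable {N S : Type}

/-- Well-formedness of a site graph: every edge is a two-element set of
(vertex, site) pairs, distinct edges are disjoint, and the edge set is finite. -/
def Wf (S₀ : SiteGraph N S) : Prop :=
  (∀ e ∈ S₀.edges, ∃ p q : Fin S₀.n × S, p ≠ q ∧ e = {p, q}) ∧
  (∀ e ∈ S₀.edges, ∀ e' ∈ S₀.edges, e ≠ e' → e ∩ e' = ∅) ∧
  S₀.edges.Finite

/-- `φ` is a site-graph isomorphism from `S₀` to `S₁`. -/
def IsSIso (S₀ S₁ : SiteGraph N S) (φ : Fin S₀.n ≃ Fin S₁.n) : Prop :=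
  (∀ (v₁ v₂ : Fin S₀.n) (s₁ s₂ : S),
      ({(v₁, s₁), (v₂, s₂)} : Set (Fin S₀.n × S)) ∈ S₀.edges ↔
      ({(φ v₁, s₁), (φ v₂, s₂)} : Set (Fin S₁.n × S)) ∈ S₁.edges) ∧
  ∀ v : Fin S₀.n, S₀.names v = S₁.names (φ v)

/-- `S₀ ≅ S₁` as site graphs. -/
def SIso (S₀ S₁ : SiteGraph N S) : Prop := ∃ φ, IsSIso S₀ S₁ φ

variable [LinearOrder S]

/-- The set of site pairs `(s,s')` with `{(v,s),(w,s')} ∈ E`. -/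
def link (S₀ : SiteGraph N S) (v w : Fin S₀.n) : Set (S × S) :=
  {p | ({(v, p.1), (w, p.2)} : Set (Fin S₀.n × S)) ∈ S₀.edges}

/-- Strict lexicographic order on site pairs. -/
def lexLt (p q : S × S) : Prop := p.1 < q.1 ∨ (p.1 = q.1 ∧ p.2 < q.2)

/-- The directed edge relation of the encoding `ρ`: every loop `(v,v)` is an edge, and
for `v ≠ w`, `(v,w)` is an edge iff the lexicographically least pair `(s,s')` with
`{(v,s),(w,s')} ∈ E` satisfies `s ≤ s'`. -/
def dirEdge (S₀ : SiteGraph N S) (v w : Fin S₀.n) : Prop :=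
  v = w ∨ (v ≠ w ∧ ∃ p ∈ S₀.link v w,
    (∀ q ∈ S₀.link v w, p = q ∨ lexLt p q) ∧ p.1 ≤ p.2)

/-- The colour of the directed edge `(v,w)` in the encoding `ρ`: the set of site
pairs linking `v` to `w`, together with the protein name `ν(v)` if `v = w`. -/
def colourOf (S₀ : SiteGraph N S) (v w : Fin S₀.n) : Set ((S × S) ⊕ N) :=
  (Sum.inl '' S₀.link v w) ∪ (if v = w then {Sum.inr (S₀.names v)} else ∅)

/-- The encoding `ρ` of site graphs into edge-coloured graphs over the colour set
consisting of sets of elements of `(S × S) ⊕ N`. -/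
def rho (S₀ : SiteGraph N S) : ColGraph (Set ((S × S) ⊕ N)) where
  n := S₀.n
  col v w := {c | S₀.dirEdge v w ∧ c = S₀.colourOf v w}

end SiteGraph

namespace SiteGraph

variable {N S : Type} [LinearOrder S]

set_option linter.unusedSectionVars false

lemma link_swap (G : SiteGraph N S) (v w : Fin G.n) (p : S × S) :
    p ∈ G.link v w ↔ (p.2, p.1) ∈ G.link w v := by
  simp only [link, Set.mem_setOf_eq]
  rw [Set.pair_comm]

lemma link_finite (G : SiteGraph N S) (h : G.Wf) {v w : Fin G.n} (hvw : v ≠ w) :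
    (G.link v w).Finite := by
  have hinj : Set.InjOn (fun p : S × S => ({(v, p.1), (w, p.2)} : Set (Fin G.n × S)))
      (G.link v w) := by
    intro p hp q hq he
    simp only at he
    have h1 : ((v, p.1) : Fin G.n × S) ∈ ({(v, q.1), (w, q.2)} : Set (Fin G.n × S)) := by
      rw [← he]; exact Set.mem_insert _ _
    have h2 : ((w, p.2) : Fin G.n × S) ∈ ({(v, q.1), (w, q.2)} : Set (Fin G.n × S)) := by
      rw [← he]; exact Set.mem_insert_of_mem _ rfl
    simp only [Set.mem_insert_iff, Set.mem_singleton_iff] at h1 h2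
    rcases h1 with h1 | h1
    · rcases h2 with h2 | h2
      · exact absurd (congrArg Prod.fst h2) (Ne.symm hvw)
      · exact Prod.ext (Prod.mk.inj h1).2 (Prod.mk.inj h2).2
    · exact absurd (congrArg Prod.fst h1) hvw
  have himg : (fun p : S × S => ({(v, p.1), (w, p.2)} : Set (Fin G.n × S))) '' (G.link v w)
      ⊆ G.edges := by
    rintro e ⟨p, hp, rfl⟩; exact hp
  exact Set.Finite.of_finite_image (h.2.2.subset himg) hinj

/-- If two distinct vertices are linked, there is a directed edge in one direction. -/
lemma dirEdge_or (G : SiteGraph N S) (h : G.Wf) {v w : Fin G.n} (hvw : v ≠ w)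
    (hne : (G.link v w).Nonempty) : G.dirEdge v w ∨ G.dirEdge w v := by
  have hmin : ∀ (a b : Fin G.n), a ≠ b → (G.link a b).Nonempty →
      ∃ p ∈ G.link a b, ∀ q ∈ G.link a b, p = q ∨ lexLt p q := by
    intro a b hab hn
    obtain ⟨p, hp, hm⟩ := Set.exists_min_image (G.link a b) (fun p => toLex p)
      (G.link_finite h hab) hn
    refine ⟨p, hp, fun q hq => ?_⟩
    have := hm q hq
    rw [Prod.Lex.le_iff] at this
    rcases this with h1 | ⟨h1, h2⟩
    · exact Or.inr (Or.inl h1)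
    · rcases lt_or_eq_of_le h2 with h2 | h2
      · exact Or.inr (Or.inr ⟨h1, h2⟩)
      · exact Or.inl (Prod.ext h1 h2)
  obtain ⟨p, hp, hpm⟩ := hmin v w hvw hne
  by_cases hle : p.1 ≤ p.2
  · exact Or.inl (Or.inr ⟨hvw, p, hp, hpm, hle⟩)
  · push_neg at hle
    have hne' : (G.link w v).Nonempty := ⟨(p.2, p.1), (G.link_swap v w p).mp hp⟩
    obtain ⟨q, hq, hqm⟩ := hmin w v (Ne.symm hvw) hne'
    refine Or.inr (Or.inr ⟨Ne.symm hvw, q, hq, hqm, ?_⟩)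
    by_contra hq12
    push_neg at hq12
    -- (q.2, q.1) ∈ link v w, so p ≤lex (q.2, q.1), hence p.1 ≤ q.2
    have hq' : (q.2, q.1) ∈ G.link v w := by
      have := (G.link_swap w v q).mp hq; simpa using this
    have hp1q2 : p.1 ≤ q.2 := by
      rcases hpm _ hq' with h1 | h1
      · exact le_of_eq (congrArg Prod.fst h1)
      · rcases h1 with h1 | ⟨h1, _⟩
        · exact le_of_lt h1
        · exact le_of_eq h1
    -- (p.2, p.1) ∈ link w v, so q ≤lex (p.2, p.1), hence q.1 ≤ p.2
    have hp' : (p.2, p.1) ∈ G.link w v := (G.link_swap v w p).mp hp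
    have hq1p2 : q.1 ≤ p.2 := by
      rcases hqm _ hp' with h1 | h1
      · exact le_of_eq (congrArg Prod.fst h1)
      · rcases h1 with h1 | ⟨h1, _⟩
        · exact le_of_lt h1
        · exact le_of_eq h1
    exact absurd (lt_of_le_of_lt (hq1p2.trans (le_of_lt hle)) (lt_of_le_of_lt hp1q2 hq12))
      (lt_irrefl q.1)

lemma colourOf_eq_iff_ne (G₀ G₁ : SiteGraph N S) {v w : Fin G₀.n} {v' w' : Fin G₁.n}
    (hvw : v ≠ w) (hvw' : v' ≠ w') (hc : G₀.colourOf v w = G₁.colourOf v' w') :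
    G₀.link v w = G₁.link v' w' := by
  have h : (Sum.inl '' G₀.link v w : Set ((S × S) ⊕ N)) = Sum.inl '' G₁.link v' w' := by
    simpa [colourOf, if_neg hvw, if_neg hvw'] using hc
  exact Set.image_injective.mpr Sum.inl_injective h

lemma colourOf_eq_iff_loop (G₀ G₁ : SiteGraph N S) {v : Fin G₀.n} {v' : Fin G₁.n}
    (hc : G₀.colourOf v v = G₁.colourOf v' v') :
    G₀.link v v = G₁.link v' v' ∧ G₀.names v = G₁.names v' := by
  simp only [colourOf, eq_self_iff_true, if_true] at hc
  constructor
  · ext p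
    constructor
    · intro hp
      have : (Sum.inl p : (S × S) ⊕ N) ∈
          (Sum.inl '' G₁.link v' v' : Set ((S × S) ⊕ N)) ∪ {Sum.inr (G₁.names v')} := by
        rw [← hc]; exact Or.inl ⟨p, hp, rfl⟩
      rcases this with ⟨q, hq, he⟩ | he
      · rwa [← Sum.inl_injective he]
      · simp at he
    · intro hp
      have : (Sum.inl p : (S × S) ⊕ N) ∈
          (Sum.inl '' G₀.link v v : Set ((S × S) ⊕ N)) ∪ {Sum.inr (G₀.names v)} := by
        rw [hc]; exact Or.inl ⟨p, hp, rfl⟩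
      rcases this with ⟨q, hq, he⟩ | he
      · rwa [← Sum.inl_injective he]
      · simp at he
  · have : (Sum.inr (G₀.names v) : (S × S) ⊕ N) ∈
        (Sum.inl '' G₁.link v' v' : Set ((S × S) ⊕ N)) ∪ {Sum.inr (G₁.names v')} := by
      rw [← hc]; exact Or.inr rfl
    rcases this with ⟨q, _, he⟩ | he
    · simp at he
    · exact Sum.inr_injective he

end SiteGraph

theorem stmt_13 {N S : Type} [LinearOrder S] (S₀ S₁ : SiteGraph N S)
    (h₀ : S₀.Wf) (h₁ : S₁.Wf) :
    SiteGraph.SIso S₀ S₁ ↔ ColGraph.Iso (SiteGraph.rho S₀) (SiteGraph.rho S₁) := by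
  constructor
  · rintro ⟨φ, hE, hN⟩
    refine ⟨φ, fun v w => ?_⟩
    have hlink : S₁.link (φ v) (φ w) = S₀.link v w := by
      ext p; exact (hE v w p.1 p.2).symm
    have heq : (v = w) ↔ (φ v = φ w) := ⟨fun h => by rw [h], fun h => φ.injective h⟩
    have hdir : S₁.dirEdge (φ v) (φ w) ↔ S₀.dirEdge v w := by
      unfold SiteGraph.dirEdge
      rw [hlink, ← heq]
      constructor
      · rintro (h | ⟨h, hp⟩)
        · exact Or.inl h
        · exact Or.inr ⟨fun he => h (heq.mp he), hp⟩
      · rintro (h | ⟨h, hp⟩)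
        · exact Or.inl h
        · exact Or.inr ⟨fun he => h (heq.mpr he), hp⟩
    have hcol : S₁.colourOf (φ v) (φ w) = S₀.colourOf v w := by
      unfold SiteGraph.colourOf
      rw [hlink, ← hN v]
      by_cases h : v = w
      · congr 1; exact (if_pos (heq.mp h)).trans (if_pos h).symm
      · congr 1; exact (if_neg (fun he => h (heq.mpr he))).trans (if_neg h).symm
    ext c
    simp only [SiteGraph.rho, Set.mem_setOf_eq, hdir, hcol]
    exact and_congr hdir (Iff.of_eq (congrArg (c = ·) hcol))
  · rintro ⟨φ, hiso⟩
    -- hiso : ∀ v w, (rho S₁).col (φ v) (φ w) = (rho S₀).col v w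
    have hloop : ∀ v : Fin S₀.n,
        S₀.link v v = S₁.link (φ v) (φ v) ∧ S₀.names v = S₁.names (φ v) := by
      intro v
      have h1 : S₀.colourOf v v ∈ (SiteGraph.rho S₁).col (φ v) (φ v) := by
        rw [hiso v v]
        exact ⟨Or.inl rfl, rfl⟩
      exact SiteGraph.colourOf_eq_iff_loop S₀ S₁ h1.2
    -- transfer of links for distinct vertices when a directed edge exists
    have hdir₀ : ∀ v w : Fin S₀.n, v ≠ w → S₀.dirEdge v w →
        S₀.link v w = S₁.link (φ v) (φ w) := by
      intro v w hvw hd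
      have h1 : S₀.colourOf v w ∈ (SiteGraph.rho S₁).col (φ v) (φ w) := by
        rw [hiso v w]; exact ⟨hd, rfl⟩
      exact SiteGraph.colourOf_eq_iff_ne S₀ S₁ hvw
        (fun he => hvw (φ.injective he)) h1.2
    have hdir₁ : ∀ v w : Fin S₀.n, v ≠ w → S₁.dirEdge (φ v) (φ w) →
        S₀.link v w = S₁.link (φ v) (φ w) := by
      intro v w hvw hd
      have h1 : S₁.colourOf (φ v) (φ w) ∈ (SiteGraph.rho S₀).col v w := by
        rw [← hiso v w]; exact ⟨hd, rfl⟩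
      exact (SiteGraph.colourOf_eq_iff_ne S₁ S₀
        (fun he => hvw (φ.injective he)) hvw h1.2).symm
    have hlink : ∀ v w : Fin S₀.n, S₀.link v w = S₁.link (φ v) (φ w) := by
      intro v w
      by_cases hvw : v = w
      · subst hvw; exact (hloop v).1
      · have hφvw : φ v ≠ φ w := fun he => hvw (φ.injective he)
        by_cases hne : (S₀.link v w).Nonempty
        · rcases S₀.dirEdge_or h₀ hvw hne with hd | hd
          · exact hdir₀ v w hvw hd
          · have h2 := hdir₀ w v (Ne.symm hvw) hd
            ext p
            rw [S₀.link_swap v w p, h2, ← S₁.link_swap (φ v) (φ w) p]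
        · by_cases hne' : (S₁.link (φ v) (φ w)).Nonempty
          · exfalso
            rcases S₁.dirEdge_or h₁ hφvw hne' with hd | hd
            · exact hne (hdir₁ v w hvw hd ▸ hne')
            · have h2 := hdir₁ w v (Ne.symm hvw) hd
              apply hne
              obtain ⟨p, hp⟩ := hne'
              refine ⟨p, ?_⟩
              rw [S₀.link_swap v w p, h2, ← S₁.link_swap (φ v) (φ w) p]
              exact hp
          · rw [Set.not_nonempty_iff_eq_empty] at hne hne'
            rw [hne, hne']
    exact ⟨φ, fun v w s₁ s₂ => by
        have := hlink v w
        constructor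
        · intro h
          have : (s₁, s₂) ∈ S₁.link (φ v) (φ w) := this ▸ h
          exact this
        · intro h
          have : (s₁, s₂) ∈ S₀.link v w := this.symm ▸ h
          exact this,
      fun v => (hloop v).2⟩
end
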